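/- For every odd integer n ≥ 5, the maximum bipartite Bell value MB(C_n) = 1/2 + ((n-1)/4)·(1+cos(π/(n-1))) is strictly smaller than the Lovász number θ(C_n) = n·cos(π/n)/(1+cos(π/n)). -/

import Mathlib

open Real

set_option maxHeartbeats 1600000 in
/-- Key inequality: `n·sin²(a) < (n-1)·sin²(b)·cos²(a)` for `a = π/(2n)`, `b = π/(2(n-1))`. -/
private lemma key_ineq (N : ℝ) (hN : 5 ≤ N) :
    N * Real.sin (π / (2 * N)) ^ 2 <
      (N - 1) * Real.sin (π / (2 * (N - 1))) ^ 2 * Real.cos (π / (2 * N)) ^ 2 := by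
  have hπ : 0 < π := pi_pos
  have hπ15 : π < 3.15 := pi_lt_d2
  have hπ3 : 3 < π := pi_gt_three
  have hN0 : (0:ℝ) < N := by linarith
  have hN1 : (0:ℝ) < N - 1 := by linarith
  set a := π / (2 * N) with ha
  set b := π / (2 * (N - 1)) with hb
  have ha0 : 0 < a := by positivity
  have hb0 : 0 < b := by positivity
  have ha1 : a ≤ 1 := by
    rw [ha, div_le_one (by linarith)]; nlinarith
  have hb1 : b ≤ 1 := by
    rw [hb, div_le_one (by linarith)]; nlinarith
  have ha2 : a ^ 2 ≤ 1 := by nlinarith [mul_nonneg (by linarith : (0:ℝ) ≤ 1 - a) (by linarith : (0:ℝ) ≤ 1 + a)]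
  have hb2 : b ^ 2 ≤ 1 := by nlinarith [mul_nonneg (by linarith : (0:ℝ) ≤ 1 - b) (by linarith : (0:ℝ) ≤ 1 + b)]
  -- bounds on sin a, sin b, cos a
  have hsina : Real.sin a < a := Real.sin_lt ha0
  have hsina0 : 0 < Real.sin a := Real.sin_pos_of_pos_of_lt_pi ha0 (by nlinarith)
  have hsa : Real.sin a ^ 2 < a ^ 2 := by nlinarith
  have hsinb : b - b ^ 3 / 4 < Real.sin b := by have := Real.sin_gt_sub_cube hb0; nlinarith [pow_pos hb0 3]
  have hb3 : b ^ 3 ≤ b := by nlinarith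
  have hbl : 0 < b - b ^ 3 / 4 := by linarith
  have hcosa : 1 - a ^ 2 / 2 < Real.cos a := Real.one_sub_sq_div_two_lt_cos (ne_of_gt ha0)
  have hcal : 0 < 1 - a ^ 2 / 2 := by linarith
  have hsb2 : (b - b ^ 3 / 4) ^ 2 < Real.sin b ^ 2 := by nlinarith
  have hca2 : (1 - a ^ 2 / 2) ^ 2 < Real.cos a ^ 2 := by nlinarith
  -- the polynomial inequality
  have main : N * a ^ 2 ≤ (N - 1) * (b - b ^ 3 / 4) ^ 2 * (1 - a ^ 2 / 2) ^ 2 := by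
    have hNa : N * a ^ 2 = π ^ 2 / (4 * N) := by
      rw [ha]; field_simp; ring
    have hNb : (N - 1) * b ^ 2 = π ^ 2 / (4 * (N - 1)) := by
      rw [hb]; field_simp; ring
    have hbfact : (b - b ^ 3 / 4) ^ 2 = b ^ 2 * (1 - b ^ 2 / 4) ^ 2 := by ring
    have hNu : N * a ^ 2 ≤ π ^ 2 / 20 := by
      rw [hNa]
      apply div_le_div_of_nonneg_left (by positivity) (by linarith) (by linarith)
    have hNv : N * b ^ 2 ≤ 5 * π ^ 2 / 64 := by
      rw [hb, div_pow, mul_div_assoc']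
      rw [div_le_div_iff₀ (by positivity) (by norm_num)]
      have h1 : 16 * N ≤ 5 * (N - 1) ^ 2 := by nlinarith
      nlinarith [mul_le_mul_of_nonneg_left h1 (by positivity : (0:ℝ) ≤ 4 * π ^ 2)]
    have hu0 : 0 < a ^ 2 := by positivity
    have hv0 : 0 < b ^ 2 := by positivity
    have hπ2 : π ^ 2 < 9.9225 := by nlinarith
    set K := (1 - b ^ 2 / 4) ^ 2 * (1 - a ^ 2 / 2) ^ 2 with hK
    have hexp : N - 1 ≤ N * K := by
      have e1 : 1 - b ^ 2 / 2 ≤ (1 - b ^ 2 / 4) ^ 2 := by nlinarith [sq_nonneg (b ^ 2)]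
      have e2 : 1 - a ^ 2 ≤ (1 - a ^ 2 / 2) ^ 2 := by nlinarith [sq_nonneg (a ^ 2)]
      have e4 : (0:ℝ) ≤ 1 - a ^ 2 := by linarith
      have e5 : (1 - b ^ 2 / 2) * (1 - a ^ 2) ≤ K := by
        rw [hK]
        exact mul_le_mul e1 e2 e4 (by positivity)
      have e6 : N - N * a ^ 2 - N * b ^ 2 / 2 ≤ N * ((1 - b ^ 2 / 2) * (1 - a ^ 2)) := by
        nlinarith [mul_nonneg (mul_nonneg hN0.le hu0.le) hv0.le]
      have e7 : N * a ^ 2 + N * b ^ 2 / 2 < 1 := by linarith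
      nlinarith [mul_le_mul_of_nonneg_left e5 hN0.le]
    have hK0 : 0 ≤ K := by positivity
    have hfrac : π ^ 2 / (4 * N) ≤ π ^ 2 / (4 * (N - 1)) * K := by
      calc π ^ 2 / (4 * N) = π ^ 2 / (4 * (N - 1)) * ((N - 1) / N) := by
            field_simp
        _ ≤ π ^ 2 / (4 * (N - 1)) * K := by
            apply mul_le_mul_of_nonneg_left _ (by positivity)
            rw [div_le_iff₀ hN0]
            nlinarith [hexp]
    calc N * a ^ 2 = π ^ 2 / (4 * N) := hNa
      _ ≤ π ^ 2 / (4 * (N - 1)) * K := hfrac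
      _ = (N - 1) * (b - b ^ 3 / 4) ^ 2 * (1 - a ^ 2 / 2) ^ 2 := by
          rw [hbfact, ← hNb, hK]; ring
  have hstep : (N - 1) * (b - b ^ 3 / 4) ^ 2 * (1 - a ^ 2 / 2) ^ 2 <
      (N - 1) * Real.sin b ^ 2 * Real.cos a ^ 2 := by
    have t2 : 0 < (1 - a ^ 2 / 2) ^ 2 := by positivity
    have hsinb0 : 0 < Real.sin b := lt_trans hbl hsinb
    have h1 : (N - 1) * (b - b ^ 3 / 4) ^ 2 * (1 - a ^ 2 / 2) ^ 2 <
        (N - 1) * Real.sin b ^ 2 * (1 - a ^ 2 / 2) ^ 2 :=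
      mul_lt_mul_of_pos_right (mul_lt_mul_of_pos_left hsb2 hN1) t2
    have h2 : (N - 1) * Real.sin b ^ 2 * (1 - a ^ 2 / 2) ^ 2 <
        (N - 1) * Real.sin b ^ 2 * Real.cos a ^ 2 :=
      mul_lt_mul_of_pos_left hca2 (mul_pos hN1 (pow_pos hsinb0 2))
    linarith
  calc N * Real.sin a ^ 2 < N * a ^ 2 := by nlinarith
    _ ≤ (N - 1) * (b - b ^ 3 / 4) ^ 2 * (1 - a ^ 2 / 2) ^ 2 := main
    _ < (N - 1) * Real.sin b ^ 2 * Real.cos a ^ 2 := hstep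

/-- For every odd integer `n ≥ 5`, the maximum bipartite Bell value
`MB(C_n) = 1/2 + ((n-1)/4)·(1+cos(π/(n-1)))` is strictly smaller than
the Lovász number `θ(C_n) = n·cos(π/n)/(1+cos(π/n))`. -/
theorem bell_max_lt_lovasz (n : ℕ) (hodd : Odd n) (hn : 5 ≤ n) :
    1 / 2 + (((n : ℝ) - 1) / 4) * (1 + Real.cos (π / ((n : ℝ) - 1))) <
      (n : ℝ) * Real.cos (π / n) / (1 + Real.cos (π / n)) := by
  have hπ : 0 < π := pi_pos
  set N : ℝ := (n : ℝ) with hNdef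
  have hN : (5:ℝ) ≤ N := by rw [hNdef]; exact_mod_cast hn
  have hN0 : (0:ℝ) < N := by linarith
  have hN1 : (0:ℝ) < N - 1 := by linarith
  set a := π / (2 * N) with ha
  set b := π / (2 * (N - 1)) with hb
  have hxa : π / N = 2 * a := by rw [ha]; field_simp
  have hyb : π / (N - 1) = 2 * b := by rw [hb]; field_simp
  have hcx : Real.cos (π / N) = 1 - 2 * Real.sin a ^ 2 := by
    rw [hxa, Real.cos_two_mul, Real.cos_sq']; ring
  have hcy : Real.cos (π / (N - 1)) = 1 - 2 * Real.sin b ^ 2 := by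
    rw [hyb, Real.cos_two_mul, Real.cos_sq']; ring
  have hs2c2 : Real.sin a ^ 2 + Real.cos a ^ 2 = 1 := Real.sin_sq_add_cos_sq a
  have hcosa0 : 0 < Real.cos a := by
    apply Real.cos_pos_of_mem_Ioo
    constructor
    · have : 0 < a := by positivity
      linarith
    · rw [ha, div_lt_div_iff₀ (by linarith) (by norm_num)]
      nlinarith
  have hden : 0 < 1 + Real.cos (π / N) := by
    rw [hcx]; nlinarith
  have key := key_ineq N hN
  have hc2 : Real.cos a ^ 2 = 1 - Real.sin a ^ 2 := by linarith
  rw [hc2] at key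
  rw [lt_div_iff₀ hden, hcx, hcy]
  nlinarith [key]
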